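/- arXiv:1308.1228 — 2 statements merged into one kernel-verified Lean document; each statement's English description precedes it below -/
import Mathlib

section
/- In the grammar automaton generated from a context-free grammar in Greibach normal form, for all finite languages S, T ∈ P_ω(X*): ô(ST) = ô(S) ∧ ô(T), and (ST)_a = S_a·T ∪ i(ô(S))·T_a. -/
/-- Language concatenation `S·T = { st | s ∈ S, t ∈ T }`. -/
def lcat {Y : Type} (S T : Set (List Y)) : Set (List Y) :=
  Set.image2 (· ++ ·) S T

/-- `i : B → P(Y*)`, sending `1` to `{ε}` and `0` to `∅` (Booleans as `Prop`). -/
def iB {Y : Type} (p : Prop) : Set (List Y) := {w | w = [] ∧ p}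

section GrammarAutomaton

variable {X A : Type} (o : X → Prop) (δ : X → A → Set (List X))

/-- Output `ô({s})` of a single word of nonterminals:
`ô({ε}) = 1`, `ô({xw}) = o(x) ∧ ô({w})`. -/
def oWord : List X → Prop
  | [] => True
  | x :: w => o x ∧ oWord w

/-- Derivative `{s}_a` of a single word of nonterminals:
`{ε}_a = ∅`, `{xw}_a = x_a·{w} ∪ i(o(x))·{w}_a`. -/
def dWord : List X → A → Set (List X)
  | [], _ => ∅
  | x :: w, a => lcat (δ x a) {w} ∪ lcat (iB (o x)) (dWord w a)

/-- Output `ô(S) = ⋁_{s ∈ S} ô({s})` of a language of words of nonterminals. -/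
def oSet (S : Set (List X)) : Prop := ∃ s ∈ S, oWord o s

/-- Derivative `S_a = ⋃_{s ∈ S} {s}_a`. -/
def dSet (S : Set (List X)) (a : A) : Set (List X) :=
  ⋃ s ∈ S, dWord o δ s a

/-- Iterated word derivative: `S_ε = S`, `S_{aw} = (S_a)_w`. -/
def dSetWord (S : Set (List X)) : List A → Set (List X)
  | [] => S
  | a :: w => dSetWord (dSet o δ S a) w

/-- One derivation step of the grammar in Greibach normal form determined by
`(o, δ)`: productions are `x → ε` when `o x` holds, and `x → aw` when `w ∈ δ x a`. -/
inductive GStep : List (X ⊕ A) → List (X ⊕ A) → Prop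
  | eps (l r : List (X ⊕ A)) (x : X) (h : o x) :
      GStep (l ++ Sum.inl x :: r) (l ++ r)
  | prod (l r : List (X ⊕ A)) (x : X) (a : A) (w : List X) (h : w ∈ δ x a) :
      GStep (l ++ Sum.inl x :: r) (l ++ Sum.inr a :: w.map Sum.inl ++ r)

/-- Derivability `⇒*`: the reflexive–transitive closure of single derivation steps. -/
def GDerives : List (X ⊕ A) → List (X ⊕ A) → Prop :=
  Relation.ReflTransGen (GStep o δ)

end GrammarAutomaton

lemma mem_lcat {Y : Type} {S T : Set (List Y)} {u : List Y} :
    u ∈ lcat S T ↔ ∃ s ∈ S, ∃ t ∈ T, s ++ t = u := by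
  simp [lcat, Set.image2]

lemma oWord_append {X : Type} (o : X → Prop) (s t : List X) :
    oWord o (s ++ t) ↔ oWord o s ∧ oWord o t := by
  induction s with
  | nil => simp [oWord]
  | cons x s ih => simp [oWord, ih, and_assoc]

lemma lcat_assoc {Y : Type} (A B C : Set (List Y)) :
    lcat (lcat A B) C = lcat A (lcat B C) :=
  Set.image2_assoc (fun _ _ _ => List.append_assoc _ _ _)

lemma lcat_singleton_eps {Y : Type} (A : Set (List Y)) : lcat {([] : List Y)} A = A := by
  simp [lcat]

lemma lcat_singletons {Y : Type} (s t : List Y) :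
    lcat ({s} : Set (List Y)) {t} = {s ++ t} := by
  simp [lcat]

lemma iB_and {Y : Type} (p q : Prop) :
    (iB (p ∧ q) : Set (List Y)) = lcat (iB p) (iB q) := by
  ext u
  simp only [iB, Set.mem_setOf_eq, lcat, Set.image2, Set.mem_setOf_eq]
  constructor
  · rintro ⟨rfl, hp, hq⟩; exact ⟨[], ⟨rfl, hp⟩, [], ⟨rfl, hq⟩, rfl⟩
  · rintro ⟨a, ⟨rfl, hp⟩, b, ⟨rfl, hq⟩, rfl⟩; exact ⟨rfl, hp, hq⟩

lemma lcat_union_left {Y : Type} (A B C : Set (List Y)) :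
    lcat (A ∪ B) C = lcat A C ∪ lcat B C := Set.image2_union_left

lemma lcat_union_right {Y : Type} (A B C : Set (List Y)) :
    lcat A (B ∪ C) = lcat A B ∪ lcat A C := Set.image2_union_right

lemma dWord_append {X A : Type} (o : X → Prop) (δ : X → A → Set (List X))
    (s t : List X) (a : A) :
    dWord o δ (s ++ t) a =
      lcat (dWord o δ s a) {t} ∪ lcat (iB (oWord o s)) (dWord o δ t a) := by
  induction s with
  | nil =>
    show dWord o δ t a = lcat (∅ : Set (List X)) {t} ∪ lcat (iB True) (dWord o δ t a)
    have h1 : (lcat (∅ : Set (List X)) {t}) = ∅ := by simp [lcat]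
    have h2 : (iB True : Set (List X)) = {[]} := by
      ext u; simp [iB]
    rw [h1, h2, lcat_singleton_eps, Set.empty_union]
  | cons x s ih =>
    show lcat (δ x a) {s ++ t} ∪ lcat (iB (o x)) (dWord o δ (s ++ t) a) = _
    rw [ih]
    show _ = lcat (lcat (δ x a) {s} ∪ lcat (iB (o x)) (dWord o δ s a)) {t} ∪
        lcat (iB (o x ∧ oWord o s)) (dWord o δ t a)
    rw [lcat_union_left, lcat_assoc, lcat_singletons, lcat_assoc, iB_and, lcat_assoc,
      Set.union_assoc, ← lcat_union_right]

/-- Product rule for finite languages: in the grammar automaton,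
`ô(ST) = ô(S) ∧ ô(T)` and `(ST)_a = S_a·T ∪ i(ô(S))·T_a`. -/
theorem product_rule_sets {X A : Type} [Finite X]
    (o : X → Prop) (δ : X → A → Set (List X))
    (hfin : ∀ x a, (δ x a).Finite)
    (S T : Set (List X)) (hS : S.Finite) (hT : T.Finite) (a : A) :
    (oSet o (lcat S T) ↔ oSet o S ∧ oSet o T) ∧
      dSet o δ (lcat S T) a =
        lcat (dSet o δ S a) T ∪ lcat (iB (oSet o S)) (dSet o δ T a) := by
  constructor
  · constructor
    · rintro ⟨u, hu, hou⟩
      rw [mem_lcat] at hu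
      obtain ⟨s, hs, t, ht, rfl⟩ := hu
      rw [oWord_append] at hou
      exact ⟨⟨s, hs, hou.1⟩, ⟨t, ht, hou.2⟩⟩
    · rintro ⟨⟨s, hs, hos⟩, ⟨t, ht, hot⟩⟩
      exact ⟨s ++ t, mem_lcat.2 ⟨s, hs, t, ht, rfl⟩, (oWord_append o s t).2 ⟨hos, hot⟩⟩
  · ext u
    simp only [dSet, Set.mem_iUnion, Set.mem_union, mem_lcat, iB,
      Set.mem_setOf_eq, oSet]
    constructor
    · rintro ⟨v, ⟨s, hs, t, ht, rfl⟩, hv⟩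
      rw [dWord_append] at hv
      rcases hv with hv | hv
      · rw [mem_lcat] at hv
        obtain ⟨w, hw, t', ht', hv⟩ := hv
        cases ht'
        exact Or.inl ⟨w, ⟨s, hs, hw⟩, t, ht, hv⟩
      · rw [mem_lcat] at hv
        obtain ⟨e, ⟨rfl, hos⟩, w, hw, rfl⟩ := hv
        exact Or.inr ⟨[], ⟨rfl, s, hs, hos⟩, w, ⟨t, ht, hw⟩, rfl⟩
    · rintro (⟨w, ⟨s, hs, hw⟩, t, ht, rfl⟩ | ⟨e, ⟨rfl, s, hs, hos⟩, w, ⟨t, ht, hw⟩, rfl⟩)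
      · refine ⟨s ++ t, ⟨s, hs, t, ht, rfl⟩, ?_⟩
        rw [dWord_append]
        exact Or.inl (mem_lcat.2 ⟨w, hw, t, rfl, rfl⟩)
      · refine ⟨s ++ t, ⟨s, hs, t, ht, rfl⟩, ?_⟩
        rw [dWord_append]
        exact Or.inr (mem_lcat.2 ⟨[], ⟨rfl, hos⟩, w, hw, rfl⟩)
end

section
/- The structure (B × P_ω((X+A)*)^A, ⊗, ⊕, 𝟙, 𝟘) is an idempotent semiring, where 𝟘 = (0, λa.∅), 𝟙 = (1, λa.∅), (o₁,δ₁) ⊕ (o₂,δ₂) = (o₁∨o₂, λa.(δ₁(a) ∪ δ₂(a))), and (o₁,δ₁) ⊗ (o₂,δ₂) = (o₁∧o₂, λa.(δ₁(a)·(i(o₂) ∪ ⋃_{b∈A}{b}·δ₂(b)) ∪ i(o₁)·δ₂(a))). -/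
section lems
variable {Y : Type}

lemma lcat_assoc_s18 (S T U : Set (List Y)) : lcat (lcat S T) U = lcat S (lcat T U) :=
  Set.image2_assoc fun _ _ _ => List.append_assoc _ _ _

lemma lcat_empty_left (S : Set (List Y)) : lcat (∅ : Set (List Y)) S = ∅ :=
  Set.image2_empty_left

lemma lcat_empty_right (S : Set (List Y)) : lcat S (∅ : Set (List Y)) = ∅ :=
  Set.image2_empty_right

lemma lcat_union_left_s18 (S T U : Set (List Y)) : lcat (S ∪ T) U = lcat S U ∪ lcat T U :=
  Set.image2_union_left

lemma lcat_union_right_s18 (S T U : Set (List Y)) : lcat S (T ∪ U) = lcat S T ∪ lcat S U :=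
  Set.image2_union_right

lemma lcat_iUnion_right {ι : Sort*} (S : Set (List Y)) (T : ι → Set (List Y)) :
    lcat S (⋃ i, T i) = ⋃ i, lcat S (T i) :=
  Set.image2_iUnion_right _ _ _

lemma lcat_iUnion_left {ι : Sort*} (S : ι → Set (List Y)) (T : Set (List Y)) :
    lcat (⋃ i, S i) T = ⋃ i, lcat (S i) T :=
  Set.image2_iUnion_left _ _ _

lemma lcat_iB_left (P : Prop) (S : Set (List Y)) : lcat (iB P) S = {w | P ∧ w ∈ S} := by
  ext w; constructor
  · rintro ⟨s, ⟨rfl, hP⟩, t, ht, rfl⟩; simpa using ⟨hP, ht⟩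
  · rintro ⟨hP, hw⟩; exact ⟨[], ⟨rfl, hP⟩, w, hw, by simp⟩

lemma lcat_iB_right (P : Prop) (S : Set (List Y)) : lcat S (iB P) = {w | P ∧ w ∈ S} := by
  ext w; constructor
  · rintro ⟨s, hs, t, ⟨rfl, hP⟩, rfl⟩; simpa using ⟨hP, hs⟩
  · rintro ⟨hP, hw⟩; exact ⟨w, hw, [], ⟨rfl, hP⟩, by simp⟩

end lems

def condSet {Y : Type} (P : Prop) (S : Set (List Y)) : Set (List Y) := {w | P ∧ w ∈ S}

section lems2
variable {Y : Type} (P Q : Prop) (S T : Set (List Y))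

lemma lcat_iB_left' : lcat (iB P) S = condSet P S := lcat_iB_left P S
lemma lcat_iB_right' : lcat S (iB P) = condSet P S := lcat_iB_right P S

lemma cSet_true : condSet True S = S := by ext w; simp [condSet]
lemma cSet_false : condSet False S = ∅ := by ext w; simp [condSet]
lemma cond_and : condSet (P ∧ Q) S = condSet P (condSet Q S) := by
  ext w; simp only [condSet, Set.mem_setOf_eq]; tauto
lemma cond_or : condSet (P ∨ Q) S = condSet P S ∪ condSet Q S := by
  ext w; simp [condSet]; tauto
lemma cond_union : condSet P (S ∪ T) = condSet P S ∪ condSet P T := by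
  ext w; simp [condSet]; tauto
lemma cond_iUnion {ι : Sort*} (U : ι → Set (List Y)) :
    condSet P (⋃ i, U i) = ⋃ i, condSet P (U i) := by
  ext w
  simp only [condSet, Set.mem_setOf_eq, Set.mem_iUnion]
  exact ⟨fun ⟨hP, i, h⟩ => ⟨i, hP, h⟩, fun ⟨i, hP, h⟩ => ⟨hP, i, h⟩⟩
lemma cond_empty : condSet P (∅ : Set (List Y)) = ∅ := by ext w; simp [condSet]
lemma lcat_cond_left : lcat (condSet P S) T = condSet P (lcat S T) := by
  ext w; constructor
  · rintro ⟨s, ⟨hP, hs⟩, t, ht, rfl⟩; exact ⟨hP, s, hs, t, ht, rfl⟩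
  · rintro ⟨hP, s, hs, t, ht, rfl⟩; exact ⟨s, ⟨hP, hs⟩, t, ht, rfl⟩
lemma lcat_cond_right : lcat S (condSet P T) = condSet P (lcat S T) := by
  ext w; constructor
  · rintro ⟨s, hs, t, ⟨hP, ht⟩, rfl⟩; exact ⟨hP, s, hs, t, ht, rfl⟩
  · rintro ⟨hP, s, hs, t, ht, rfl⟩; exact ⟨s, hs, t, ⟨hP, ht⟩, rfl⟩
lemma cond_iB_swap : condSet P (iB Q : Set (List Y)) = condSet Q (iB P) := by
  ext w; simp only [condSet, iB, Set.mem_setOf_eq]; tauto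

lemma iB_and_s18 : iB (P ∧ Q) = condSet P (iB Q : Set (List Y)) := by
  ext w; simp [condSet, iB]; tauto
lemma iB_or : iB (P ∨ Q) = (iB P : Set (List Y)) ∪ iB Q := by
  ext w; simp [condSet, iB]; tauto
lemma iB_false : iB False = (∅ : Set (List Y)) := by ext w; simp [iB]

end lems2


section PairSemiring

variable {X A : Type}

/-- The carrier `B × P_ω((X+A)*)^A` (with `B` modelled as `Prop` and finite
languages as finitely-supported elements of `Set (List (X ⊕ A))`). -/
abbrev Pair (X A : Type) : Type := Prop × (A → Set (List (X ⊕ A)))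

/-- `𝟘 = (0, λa.∅)`. -/
def pZero : Pair X A := (False, fun _ => ∅)

/-- `𝟙 = (1, λa.∅)`. -/
def pOne : Pair X A := (True, fun _ => ∅)

/-- `(o₁,δ₁) ⊕ (o₂,δ₂) = (o₁ ∨ o₂, λa. δ₁(a) ∪ δ₂(a))`. -/
def pAdd (p q : Pair X A) : Pair X A :=
  (p.1 ∨ q.1, fun a => p.2 a ∪ q.2 a)

/-- `(o₁,δ₁) ⊗ (o₂,δ₂) =
(o₁ ∧ o₂, λa. δ₁(a)·(i(o₂) ∪ ⋃_{b∈A} {b}·δ₂(b)) ∪ i(o₁)·δ₂(a))`. -/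
def pMul (p q : Pair X A) : Pair X A :=
  (p.1 ∧ q.1, fun a =>
    lcat (p.2 a) (iB q.1 ∪ ⋃ b : A, lcat {[Sum.inr b]} (q.2 b)) ∪
      lcat (iB p.1) (q.2 a))

/-- `E(p) = i(o) ∪ ⋃_b {b}·δ(b)`. -/
def Ef (p : Pair X A) : Set (List (X ⊕ A)) :=
  iB p.1 ∪ ⋃ b : A, lcat {[Sum.inr b]} (p.2 b)

lemma pMul_snd (p q : Pair X A) (a : A) :
    (pMul p q).2 a = lcat (p.2 a) (Ef q) ∪ condSet p.1 (q.2 a) := by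
  simp [pMul, Ef, lcat_iB_left']

lemma pMul_fst (p q : Pair X A) : (pMul p q).1 = (p.1 ∧ q.1) := rfl

lemma Ef_mul (q r : Pair X A) : Ef (pMul q r) = lcat (Ef q) (Ef r) := by
  simp only [Ef, pMul_snd, pMul_fst, iB_and_s18, lcat_union_left_s18, lcat_union_right_s18,
    lcat_iUnion_left, lcat_iUnion_right, lcat_cond_left, lcat_cond_right,
    lcat_iB_left', lcat_iB_right', cond_union, cond_iUnion, cond_and, lcat_assoc_s18,
    Set.iUnion_union_distrib, cond_iB_swap]
  rw [Set.iUnion_comm fun i i_1 => lcat {[Sum.inr i]} (lcat (q.2 i) (lcat {[Sum.inr i_1]} (r.2 i_1)))]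
  ext w; simp only [Set.mem_union]; tauto

end PairSemiring

/-- `(B × P_ω((X+A)*)^A, ⊗, ⊕, 𝟙, 𝟘)` is an idempotent semiring. -/
theorem pair_idempotent_semiring {X A : Type} [Fintype A] :
    ∀ p q r : Pair X A,
      (∀ a, (p.2 a).Finite) → (∀ a, (q.2 a).Finite) → (∀ a, (r.2 a).Finite) →
      pAdd pZero p = p ∧
      pAdd p pZero = p ∧
      pAdd p q = pAdd q p ∧
      pAdd (pAdd p q) r = pAdd p (pAdd q r) ∧
      pAdd p p = p ∧
      pMul pOne p = p ∧
      pMul p pOne = p ∧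
      pMul (pMul p q) r = pMul p (pMul q r) ∧
      pMul (pAdd p q) r = pAdd (pMul p r) (pMul q r) ∧
      pMul p (pAdd q r) = pAdd (pMul p q) (pMul p r) ∧
      pMul p pZero = pZero ∧
      pMul pZero p = pZero := by
  intro p q r _ _ _
  have hone : (pOne : Pair X A).1 = True := rfl
  refine ⟨?_, ?_, ?_, ?_, ?_, ?_, ?_, ?_, ?_, ?_, ?_, ?_⟩
  · exact Prod.ext (by simp [pAdd, pZero]) (by funext a; simp [pAdd, pZero])
  · exact Prod.ext (by simp [pAdd, pZero]) (by funext a; simp [pAdd, pZero])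
  · exact Prod.ext (by simp [pAdd]; tauto) (by funext a; simp [pAdd, Set.union_comm])
  · exact Prod.ext (by simp [pAdd]; tauto) (by funext a; simp [pAdd, Set.union_assoc])
  · exact Prod.ext (by simp [pAdd]) (by funext a; simp [pAdd])
  · -- pMul pOne p = p
    refine Prod.ext (by simp [pMul, pOne]) (funext fun a => ?_)
    show lcat (∅ : Set (List (X ⊕ A))) (Ef p) ∪ lcat (iB True) (p.2 a) = p.2 a
    simp [lcat_empty_left, lcat_iB_left', cSet_true]
  · -- pMul p pOne = p
    refine Prod.ext (by simp [pMul, pOne]) (funext fun a => ?_)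
    show lcat (p.2 a) (iB True ∪ ⋃ b : A, lcat {[Sum.inr b]} ∅) ∪
        lcat (iB p.1) (∅ : Set (List (X ⊕ A))) = p.2 a
    simp [lcat_empty_right, lcat_iB_right', cSet_true]
  · -- associativity
    refine Prod.ext (by simp [pMul]; tauto) (funext fun a => ?_)
    show ((pMul (pMul p q) r).2 a) = ((pMul p (pMul q r)).2 a)
    simp only [pMul_snd, Ef_mul, pMul_fst, lcat_union_left_s18, lcat_union_right_s18,
      lcat_cond_left, lcat_cond_right, cond_union, cond_and, lcat_assoc_s18]
    ext w; simp only [Set.mem_union]; tauto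
  · -- right distributivity
    refine Prod.ext (by simp [pMul, pAdd]; tauto) (funext fun a => ?_)
    show ((pMul (pAdd p q) r).2 a) = ((pAdd (pMul p r) (pMul q r)).2 a)
    simp only [pMul_snd, pAdd, lcat_union_left_s18, cond_or, cond_union]
    ext w; simp only [Set.mem_union]; tauto
  · -- left distributivity
    refine Prod.ext (by simp [pMul, pAdd]; tauto) (funext fun a => ?_)
    show ((pMul p (pAdd q r)).2 a) = ((pAdd (pMul p q) (pMul p r)).2 a)
    have hE : Ef (pAdd q r) = Ef q ∪ Ef r := by
      simp only [Ef, pAdd, iB_or, lcat_union_right_s18, Set.iUnion_union_distrib]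
      ext w; simp only [Set.mem_union]; tauto
    have h2 : (pAdd q r).2 a = q.2 a ∪ r.2 a := rfl
    have h3 : (pAdd (pMul p q) (pMul p r)).2 a = (pMul p q).2 a ∪ (pMul p r).2 a := rfl
    simp only [h3, pMul_snd, hE, h2, lcat_union_right_s18, cond_union, lcat_iB_left']
    ext w; simp only [Set.mem_union]; tauto
  · -- p * 0 = 0
    refine Prod.ext (by simp [pMul, pZero]) (funext fun a => ?_)
    show lcat (p.2 a) (iB False ∪ ⋃ b : A, lcat {[Sum.inr b]} ∅) ∪
        lcat (iB p.1) (∅ : Set (List (X ⊕ A))) = ∅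
    simp [iB_false, lcat_empty_right, lcat_empty_left]
  · -- 0 * p = 0
    refine Prod.ext (by simp [pMul, pZero]) (funext fun a => ?_)
    show lcat (∅ : Set (List (X ⊕ A))) (Ef p) ∪ lcat (iB False) (p.2 a) = ∅
    simp [iB_false, lcat_empty_left]
end
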